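/- Let T > 0, let a, b, c, f : (0,T) × (0,1) → ℝ with sup_{0<x<1, 0<t≤T} |f(t,x)| < +∞, let u ∈ C⁰([0,T] × [0,1]) with u[t] ∈ C²((0,1)) for almost all t ∈ (0,T), ∂u/∂t continuous on (0,T) × [0,1], ∂u/∂x(t,0) and ∂u/∂x(t,1) existing for all t ∈ (0,T], satisfying ∂u/∂t = a·∂²u/∂x² + b·∂u/∂x + c·u + f for almost all t and all x ∈ (0,1). Let μ₀, μ₁ > 0, λ₀, λ₁ ∈ ℝ be constants. Suppose a ≥ 0 on (0,T)×(0,1), there exist σ > 0 and η ∈ C²([0,1];(0,+∞)) with aη'' + bη' + (σ+c)η ≤ 0 on (0,T)×(0,1), and both μ₀η'(0) − λ₀η(0) < 0 and μ₁η'(1) + λ₁η(1) > 0. Then for all ζ ∈ [0,σ) and t ∈ (0,T]: ‖u[t]‖_{∞,η} ≤ max( exp(−ζt)·‖u[0]‖_{∞,η}, sup_{0<s≤t} max( r₀(s), r₁(s), ‖f[s]‖_{∞,η}/(σ−ζ) )·exp(−ζ(t−s)) ), where r₀(t) := min( |u(t,0)|/η(0), |μ₀·∂u/∂x(t,0) −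 λ₀·u(t,0)| / |μ₀η'(0) − λ₀η(0)| ) and r₁(t) := min( |u(t,1)|/η(1), |μ₁·∂u/∂x(t,1) + λ₁·u(t,1)| / (μ₁η'(1) + λ₁η(1)) ). -/

import Mathlib

open Set MeasureTheory Filter Topology

lemma my_lip_decrease {g : ℝ → ℝ} {C ρ a b : ℝ} (hab : a < b) (hC : 0 ≤ C) (hρ : 0 ≤ ρ)
    (hlip : ∀ s ∈ Icc a b, ∀ s' ∈ Icc a b, |g s - g s'| ≤ C * |s - s'|)
    (hae : ∀ᵐ r ∂volume, r ∈ Ioo a b → ∀ y : ℝ, HasDerivAt g y r → y ≤ -ρ) :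
    g b - g a ≤ -ρ * (b - a) := by
  have hlip' : LipschitzOnWith (Real.toNNReal C) g (Icc a b) := by
    apply LipschitzOnWith.of_dist_le_mul
    intro x hx y hy
    rw [Real.dist_eq, Real.dist_eq, Real.coe_toNNReal _ hC]
    exact hlip x hx y hy
  obtain ⟨G, hGlip, hGeq⟩ := hlip'.extend_real
  have hGd : ∀ x y : ℝ, |G x - G y| ≤ C * |x - y| := by
    intro x y
    have := hGlip.dist_le_mul x y
    rwa [Real.dist_eq, Real.dist_eq, Real.coe_toNNReal _ hC] at this
  set Fm : ℝ → ℝ := fun s => C * s - G s with hFm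
  have hmono : Monotone Fm := by
    intro x y hxy
    have h1 := hGd y x
    have h2 : G y - G x ≤ C * (y - x) := by
      calc G y - G x ≤ |G y - G x| := le_abs_self _
        _ ≤ C * |y - x| := h1
        _ = C * (y - x) := by rw [abs_of_nonneg (by linarith)]
    simp only [hFm]
    linarith
  have hFmCont : Continuous Fm := (continuous_const.mul continuous_id).sub hGlip.continuous
  set St : StieltjesFunction ℝ := ⟨Fm, hmono, fun x => hFmCont.continuousAt.continuousWithinAt⟩
    with hSt
  have hStF : ∀ x, St x = Fm x := fun x => rfl
  have h1 := St.ae_hasDerivAt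
  have h2 := Measure.rnDeriv_lt_top St.measure volume
  have key : ∀ᵐ r ∂volume, r ∈ Ioo a b →
      ENNReal.ofReal (C + ρ) ≤ St.measure.rnDeriv volume r := by
    filter_upwards [h1, h2, hae] with r hr1 hr2 hr3 hrmem
    set d := (St.measure.rnDeriv volume r).toReal with hd
    have hdG : HasDerivAt G (C - d) r := by
      have hid : HasDerivAt (fun s : ℝ => C * s) C r := by
        simpa using (hasDerivAt_id r).const_mul C
      have := hid.sub hr1
      have heq : (fun s => C * s - St s) = G := by
        funext s
        simp [hStF, hFm]
      rw [← heq]; exact this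
    have hg' : HasDerivAt g (C - d) r := by
      have hev : g =ᶠ[𝓝 r] G := by
        filter_upwards [Icc_mem_nhds hrmem.1 hrmem.2] with s hs using hGeq hs
      exact (hev.hasDerivAt_iff).mpr hdG
    have := hr3 hrmem _ hg'
    have hCd : C + ρ ≤ d := by linarith
    exact ENNReal.ofReal_le_of_le_toReal hCd
  have hchain : ENNReal.ofReal ((C + ρ) * (b - a)) ≤ ENNReal.ofReal (Fm b - Fm a) := by
    calc ENNReal.ofReal ((C + ρ) * (b - a))
        = ENNReal.ofReal (C + ρ) * volume (Ioo a b) := by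
          rw [Real.volume_Ioo, ← ENNReal.ofReal_mul (by linarith)]
      _ = ∫⁻ _ in Ioo a b, ENNReal.ofReal (C + ρ) ∂volume := by
          rw [setLIntegral_const]
      _ ≤ ∫⁻ r in Ioo a b, St.measure.rnDeriv volume r ∂volume := by
          apply lintegral_mono_ae
          filter_upwards [ae_restrict_of_ae key, ae_restrict_mem measurableSet_Ioo]
            with r hr hrmem using hr hrmem
      _ ≤ ∫⁻ r in Ioc a b, St.measure.rnDeriv volume r ∂volume :=
          lintegral_mono_set Ioo_subset_Ioc_self
      _ ≤ St.measure (Ioc a b) := Measure.setLIntegral_rnDeriv_le _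
      _ = ENNReal.ofReal (St b - St a) := St.measure_Ioc a b
      _ = ENNReal.ofReal (Fm b - Fm a) := rfl
  have hge : (C + ρ) * (b - a) ≤ Fm b - Fm a := by
    have h0 : (0:ℝ) ≤ (C + ρ) * (b - a) := by
      apply mul_nonneg (by linarith) (by linarith)
    rcases le_or_gt ((C + ρ) * (b - a)) (Fm b - Fm a) with h | h
    · exact h
    · exfalso
      have hmba : Fm a ≤ Fm b := hmono hab.le
      have := ENNReal.ofReal_lt_ofReal_iff_of_nonneg (by linarith : (0:ℝ) ≤ Fm b - Fm a) |>.mpr h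
      exact absurd hchain (not_le.mpr this)
  have hga : G a = g a := (hGeq ⟨le_refl a, hab.le⟩).symm
  have hgb : G b = g b := (hGeq ⟨hab.le, le_refl b⟩).symm
  have : Fm b - Fm a = C * (b - a) - (g b - g a) := by simp only [hFm]; rw [← hga, ← hgb]; ring
  linarith [hge, this ▸ hge]

lemma my_deriv_nonpos_left {f : ℝ → ℝ} {d : ℝ}
    (hf : HasDerivWithinAt f d (Icc (0:ℝ) 1) 0)
    (hmax : ∀ x ∈ Icc (0:ℝ) 1, f x ≤ f 0) : d ≤ 0 := by
  rw [hasDerivWithinAt_iff_tendsto_slope, Icc_diff_left] at hf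
  haveI : (𝓝[Ioc (0:ℝ) 1] (0:ℝ)).NeBot := by
    apply mem_closure_iff_nhdsWithin_neBot.mp
    rw [closure_Ioc (one_ne_zero).symm]
    exact ⟨le_refl 0, zero_le_one⟩
  refine le_of_tendsto hf ?_
  filter_upwards [self_mem_nhdsWithin] with z hz
  rw [slope_def_field]
  apply div_nonpos_of_nonpos_of_nonneg
  · have := hmax z (Ioc_subset_Icc_self hz)
    linarith
  · linarith [hz.1]

lemma my_deriv_nonneg_right {f : ℝ → ℝ} {d : ℝ}
    (hf : HasDerivWithinAt f d (Icc (0:ℝ) 1) 1)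
    (hmax : ∀ x ∈ Icc (0:ℝ) 1, f x ≤ f 1) : 0 ≤ d := by
  rw [hasDerivWithinAt_iff_tendsto_slope, Icc_sdiff_right] at hf
  haveI : (𝓝[Ico (0:ℝ) 1] (1:ℝ)).NeBot := by
    apply mem_closure_iff_nhdsWithin_neBot.mp
    rw [closure_Ico (one_ne_zero).symm]
    exact ⟨zero_le_one, le_refl 1⟩
  refine ge_of_tendsto hf ?_
  filter_upwards [self_mem_nhdsWithin] with z hz
  rw [slope_def_field, div_nonneg_iff]
  right
  constructor
  · have := hmax z (Ico_subset_Icc_self hz)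
    linarith
  · linarith [hz.2]

lemma my_secondDeriv_nonpos {g g' : ℝ → ℝ} {E x₀ lo hi : ℝ} (hx : x₀ ∈ Ioo lo hi)
    (hg : ∀ x ∈ Ioo lo hi, HasDerivAt g (g' x) x)
    (hg0 : g' x₀ = 0)
    (hE : HasDerivAt g' E x₀)
    (hmax : ∀ x ∈ Ioo lo hi, g x ≤ g x₀) : E ≤ 0 := by
  by_contra hEpos
  push_neg at hEpos
  have hslope := hasDerivAt_iff_tendsto_slope.mp hE
  have hev : ∀ᶠ z in 𝓝[≠] x₀, 0 < slope g' x₀ z := hslope.eventually (eventually_gt_nhds hEpos)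
  have hsub : Ioi x₀ ⊆ {x₀}ᶜ := fun z hz => ne_of_gt hz
  have hev' : ∀ᶠ z in 𝓝[>] x₀, 0 < slope g' x₀ z := hev.filter_mono (nhdsWithin_mono _ hsub)
  have hev2 : Ioo x₀ hi ∈ 𝓝[>] x₀ := Ioo_mem_nhdsGT_of_mem ⟨le_refl _, hx.2⟩
  obtain ⟨U, hU⟩ := ((hev'.and (eventually_mem_set.mpr hev2)).exists_mem)
  obtain ⟨hUmem, hUsub⟩ := hU
  obtain ⟨u, hu, huIoo⟩ := mem_nhdsGT_iff_exists_Ioo_subset.mp hUmem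
  obtain ⟨x₁, hx₁⟩ := exists_between (show x₀ < u from hu)
  have hx₁good : ∀ z ∈ Ioo x₀ x₁, 0 < slope g' x₀ z ∧ z ∈ Ioo x₀ hi := by
    intro z hz
    exact hUsub z (huIoo ⟨hz.1, hz.2.trans hx₁.2⟩)
  have hx₁mem : x₁ ∈ Ioo x₀ hi := (hUsub x₁ (huIoo hx₁)).2
  have hIccsub : Icc x₀ x₁ ⊆ Ioo lo hi := fun z hz =>
    ⟨lt_of_lt_of_le hx.1 hz.1, lt_of_le_of_lt hz.2 hx₁mem.2⟩
  have hmono : StrictMonoOn g (Icc x₀ x₁) := by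
    apply strictMonoOn_of_deriv_pos (convex_Icc _ _)
    · intro z hz
      exact (hg z (hIccsub hz)).continuousAt.continuousWithinAt
    · intro z hz
      rw [interior_Icc] at hz
      rw [(hg z (hIccsub (Ioo_subset_Icc_self hz))).deriv]
      have hsl := (hx₁good z hz).1
      rw [slope_def_field, hg0, sub_zero] at hsl
      have hzpos : 0 < z - x₀ := sub_pos.mpr hz.1
      have := mul_pos hsl hzpos
      rwa [div_mul_cancel₀ _ (ne_of_gt hzpos)] at this
  have hlt : g x₀ < g x₁ := hmono (left_mem_Icc.mpr hx₁mem.1.le) (right_mem_Icc.mpr hx₁mem.1.le) hx₁mem.1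
  exact absurd (hmax x₁ (⟨hx.1.trans hx₁mem.1, hx₁mem.2⟩)) (not_le.mpr hlt)

lemma my_sup_attained {w : ℝ → ℝ} (hw : ContinuousOn w (Icc (0:ℝ) 1)) :
    ∃ x ∈ Icc (0:ℝ) 1, (∀ y ∈ Icc (0:ℝ) 1, w y ≤ w x) ∧ sSup (w '' Icc 0 1) = w x := by
  obtain ⟨x, hx, hmax⟩ := isCompact_Icc.exists_isMaxOn (nonempty_Icc.mpr zero_le_one) hw
  have hmax' := isMaxOn_iff.mp hmax
  refine ⟨x, hx, hmax', ?_⟩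
  apply IsGreatest.csSup_eq
  constructor
  · exact mem_image_of_mem _ hx
  · rintro v ⟨y, hy, rfl⟩
    exact hmax' y hy

lemma my_sup_cont {W : ℝ → ℝ → ℝ} {T : ℝ}
    (hW : ContinuousOn (fun p : ℝ × ℝ => W p.1 p.2) (Icc 0 T ×ˢ Icc (0:ℝ) 1)) :
    ContinuousOn (fun s => sSup (W s '' Icc 0 1)) (Icc 0 T) := by
  have hWs : ∀ s ∈ Icc (0:ℝ) T, ContinuousOn (W s) (Icc (0:ℝ) 1) := by
    intro s hs
    have : ContinuousOn (fun x : ℝ => (s, x)) (Icc (0:ℝ) 1) :=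
      (continuous_const.prodMk continuous_id).continuousOn
    exact hW.comp this (fun x hx => ⟨hs, hx⟩)
  have hUC := (isCompact_Icc.prod isCompact_Icc).uniformContinuousOn_of_continuous hW
  rw [Metric.uniformContinuousOn_iff] at hUC
  rw [Metric.continuousOn_iff]
  intro s hs ε hε
  obtain ⟨δ, hδ, hδ'⟩ := hUC (ε/2) (by linarith)
  refine ⟨δ, hδ, ?_⟩
  intro s' hs' hdist
  have hpt : ∀ x ∈ Icc (0:ℝ) 1, |W s' x - W s x| ≤ ε/2 := by
    intro x hx
    have := hδ' (s', x) ⟨hs', hx⟩ (s, x) ⟨hs, hx⟩ (by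
      rw [Prod.dist_eq]
      simp only [dist_self]
      rw [max_eq_left dist_nonneg]
      exact hdist)
    rw [Real.dist_eq] at this
    exact this.le
  have hne : (W s '' Icc 0 1).Nonempty := (nonempty_Icc.mpr zero_le_one).image _
  have hne' : (W s' '' Icc 0 1).Nonempty := (nonempty_Icc.mpr zero_le_one).image _
  have hbdd : BddAbove (W s '' Icc 0 1) := isCompact_Icc.bddAbove_image (hWs s hs)
  have hbdd' : BddAbove (W s' '' Icc 0 1) := isCompact_Icc.bddAbove_image (hWs s' hs')
  have h1 : sSup (W s' '' Icc 0 1) ≤ sSup (W s '' Icc 0 1) + ε/2 := by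
    apply csSup_le hne'
    rintro v ⟨y, hy, rfl⟩
    have h1 := hpt y hy
    have h2 : W s y ≤ sSup (W s '' Icc 0 1) := le_csSup hbdd (mem_image_of_mem _ hy)
    have := abs_le.mp h1
    linarith [this.2]
  have h2 : sSup (W s '' Icc 0 1) ≤ sSup (W s' '' Icc 0 1) + ε/2 := by
    apply csSup_le hne
    rintro v ⟨y, hy, rfl⟩
    have h1 := hpt y hy
    have h2 : W s' y ≤ sSup (W s' '' Icc 0 1) := le_csSup hbdd' (mem_image_of_mem _ hy)
    have := abs_le.mp h1
    linarith [this.1]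
  rw [Real.dist_eq, abs_lt]
  constructor <;> linarith

set_option maxHeartbeats 2000000 in
/-- **Corollary 2.3** (Karafyllis–Krstic), case (2.11): Robin conditions at both ends. -/
theorem cor2_3_case4
    (T : ℝ) (hT : 0 < T)
    (a b c f : ℝ → ℝ → ℝ)
    (hf_bdd : ∃ M : ℝ, ∀ t ∈ Set.Ioc (0:ℝ) T, ∀ x ∈ Set.Ioo (0:ℝ) 1, |f t x| ≤ M)
    (u ut ux uxx : ℝ → ℝ → ℝ)
    (hu_cont : ContinuousOn (fun p : ℝ × ℝ => u p.1 p.2) (Set.Icc 0 T ×ˢ Set.Icc 0 1))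
    (hut : ∀ t ∈ Set.Ioo (0:ℝ) T, ∀ x ∈ Set.Icc (0:ℝ) 1,
      HasDerivAt (fun τ => u τ x) (ut t x) t)
    (hut_cont : ContinuousOn (fun p : ℝ × ℝ => ut p.1 p.2) (Set.Ioo 0 T ×ˢ Set.Icc 0 1))
    (hux_bd : ∀ t ∈ Set.Ioc (0:ℝ) T,
      HasDerivWithinAt (u t) (ux t 0) (Set.Icc 0 1) 0 ∧
      HasDerivWithinAt (u t) (ux t 1) (Set.Icc 0 1) 1)
    (hC2_pde : ∀ᵐ t ∂(volume.restrict (Set.Ioo 0 T)),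
      (∀ x ∈ Set.Ioo (0:ℝ) 1, HasDerivAt (u t) (ux t x) x) ∧
      (∀ x ∈ Set.Ioo (0:ℝ) 1, HasDerivAt (ux t) (uxx t x) x) ∧
      ContinuousOn (uxx t) (Set.Ioo 0 1) ∧
      (∀ x ∈ Set.Ioo (0:ℝ) 1,
        ut t x = a t x * uxx t x + b t x * ux t x + c t x * u t x + f t x))
    (ha : ∀ t ∈ Set.Ioo (0:ℝ) T, ∀ x ∈ Set.Ioo (0:ℝ) 1, 0 ≤ a t x)
    (μ₀ μ₁ lam₀ lam₁ : ℝ) (hμ₀ : 0 < μ₀) (hμ₁ : 0 < μ₁)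
    (σ : ℝ) (hσ : 0 < σ)
    (η η' η'' : ℝ → ℝ)
    (hη_pos : ∀ x ∈ Set.Icc (0:ℝ) 1, 0 < η x)
    (hη1 : ∀ x ∈ Set.Icc (0:ℝ) 1, HasDerivWithinAt η (η' x) (Set.Icc 0 1) x)
    (hη2 : ∀ x ∈ Set.Icc (0:ℝ) 1, HasDerivWithinAt η' (η'' x) (Set.Icc 0 1) x)
    (hη''_cont : ContinuousOn η'' (Set.Icc 0 1))
    (hcond : ∀ t ∈ Set.Ioo (0:ℝ) T, ∀ x ∈ Set.Ioo (0:ℝ) 1,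
      a t x * η'' x + b t x * η' x + (σ + c t x) * η x ≤ 0)
    (hbc0 : μ₀ * η' 0 - lam₀ * η 0 < 0)
    (hbc1 : μ₁ * η' 1 + lam₁ * η 1 > 0) :
    ∀ ζ ∈ Set.Ico (0:ℝ) σ, ∀ t ∈ Set.Ioc (0:ℝ) T,
      sSup ((fun x => |u t x| / η x) '' Set.Icc 0 1) ≤
        max (Real.exp (-ζ * t) * sSup ((fun x => |u 0 x| / η x) '' Set.Icc 0 1))
          (sSup ((fun s =>
              max (max
                  (min (|u s 0| / η 0) (|μ₀ * ux s 0 - lam₀ * u s 0| / |μ₀ * η' 0 - lam₀ * η 0|))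
                  (min (|u s 1| / η 1) (|μ₁ * ux s 1 + lam₁ * u s 1| / (μ₁ * η' 1 + lam₁ * η 1))))
                (sSup ((fun x => |f s x| / η x) '' Set.Ioo 0 1) / (σ - ζ)) *
              Real.exp (-ζ * (t - s))) '' Set.Ioc 0 t)) := by
  intro ζ hζ t ht
  obtain ⟨hζ0, hζσ⟩ := hζ
  have hσζ : 0 < σ - ζ := by linarith
  have h01 : (0:ℝ) ∈ Icc (0:ℝ) 1 := ⟨le_refl 0, zero_le_one⟩
  have h11 : (1:ℝ) ∈ Icc (0:ℝ) 1 := ⟨zero_le_one, le_refl 1⟩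
  -- basic continuity of η
  have ηcont : ContinuousOn η (Icc (0:ℝ) 1) := fun x hx => (hη1 x hx).continuousWithinAt
  -- minimum of η
  obtain ⟨xm0, hxm0, hmin0⟩ := isCompact_Icc.exists_isMinOn (nonempty_Icc.mpr zero_le_one) ηcont
  set m : ℝ := η xm0 with hm
  have hmpos : 0 < m := hη_pos xm0 hxm0
  have hmle : ∀ x ∈ Icc (0:ℝ) 1, m ≤ η x := fun x hx => isMinOn_iff.mp hmin0 x hx
  -- weighted function and sup
  set w : ℝ → ℝ → ℝ := fun s x => |u s x| / η x with hw
  have hwnn : ∀ s x, x ∈ Icc (0:ℝ) 1 → 0 ≤ w s x := by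
    intro s x hx
    rw [hw]
    exact div_nonneg (abs_nonneg _) (hη_pos x hx).le
  have Wcont : ContinuousOn (fun p : ℝ × ℝ => w p.1 p.2) (Icc 0 T ×ˢ Icc (0:ℝ) 1) := by
    rw [hw]
    apply ContinuousOn.div hu_cont.abs
    · exact ηcont.comp continuous_snd.continuousOn (fun p hp => hp.2)
    · exact fun p hp => (hη_pos p.2 hp.2).ne'
  have hws : ∀ s ∈ Icc (0:ℝ) T, ContinuousOn (w s) (Icc (0:ℝ) 1) := by
    intro s hs
    have hmap : ContinuousOn (fun x : ℝ => (s, x)) (Icc (0:ℝ) 1) :=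
      (continuous_const.prodMk continuous_id).continuousOn
    exact Wcont.comp hmap (fun x hx => ⟨hs, hx⟩)
  set H : ℝ → ℝ := fun s => sSup (w s '' Icc 0 1) with hH
  have Hcont : ContinuousOn H (Icc (0:ℝ) T) := by rw [hH]; exact my_sup_cont Wcont
  have hatt : ∀ s ∈ Icc (0:ℝ) T, ∃ x ∈ Icc (0:ℝ) 1,
      (∀ y ∈ Icc (0:ℝ) 1, w s y ≤ w s x) ∧ H s = w s x := by
    intro s hs
    obtain ⟨x, hx, h1, h2⟩ := my_sup_attained (hws s hs)
    exact ⟨x, hx, h1, by rw [hH]; exact h2⟩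
  have hub : ∀ s ∈ Icc (0:ℝ) T, ∀ x ∈ Icc (0:ℝ) 1, w s x ≤ H s := by
    intro s hs x hx
    obtain ⟨y, hy, h1, h2⟩ := hatt s hs
    rw [h2]; exact h1 x hx
  have hHnn : ∀ s ∈ Icc (0:ℝ) T, 0 ≤ H s := by
    intro s hs
    exact le_trans (hwnn s 0 h01) (hub s hs 0 h01)
  -- global bound on u
  obtain ⟨CU, hCU⟩ := (isCompact_Icc.prod isCompact_Icc).exists_bound_of_continuousOn hu_cont
  have hCU' : ∀ s ∈ Icc (0:ℝ) T, ∀ x ∈ Icc (0:ℝ) 1, |u s x| ≤ CU := by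
    intro s hs x hx
    have := hCU (s, x) ⟨hs, hx⟩
    rwa [Real.norm_eq_abs] at this
  have hCUnn : 0 ≤ CU := le_trans (abs_nonneg _) (hCU' 0 ⟨le_refl 0, hT.le⟩ 0 h01)
  have hHB : ∀ s ∈ Icc (0:ℝ) T, H s ≤ CU / m := by
    intro s hs
    rw [hH]
    apply csSup_le ((nonempty_Icc.mpr zero_le_one).image _)
    rintro v ⟨x, hx, rfl⟩
    rw [hw]
    exact div_le_div₀ (by exact hCUnn) (hCU' s hs x hx) hmpos (hmle x hx)
  -- the forcing sup
  obtain ⟨Mf, hMf⟩ := hf_bdd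
  set MF : ℝ := max Mf 0 with hMF
  have hMFnn : 0 ≤ MF := le_max_right _ _
  set F : ℝ → ℝ := fun s => sSup ((fun x => |f s x| / η x) '' Ioo 0 1) with hF
  have hFbdd : ∀ s ∈ Ioc (0:ℝ) T, BddAbove ((fun x => |f s x| / η x) '' Ioo (0:ℝ) 1) := by
    intro s hs
    refine ⟨MF / m, ?_⟩
    rintro v ⟨x, hx, rfl⟩
    exact div_le_div₀ hMFnn (le_trans (hMf s hs x hx) (le_max_left _ _)) hmpos
      (hmle x (Ioo_subset_Icc_self hx))
  have hFle : ∀ s ∈ Ioc (0:ℝ) T, F s ≤ MF / m := by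
    intro s hs
    rw [hF]
    apply csSup_le (((nonempty_Ioo.mpr one_pos).image _))
    rintro v ⟨x, hx, rfl⟩
    exact div_le_div₀ hMFnn (le_trans (hMf s hs x hx) (le_max_left _ _)) hmpos
      (hmle x (Ioo_subset_Icc_self hx))
  have hFge : ∀ s ∈ Ioc (0:ℝ) T, ∀ x ∈ Ioo (0:ℝ) 1, |f s x| / η x ≤ F s := by
    intro s hs x hx
    rw [hF]
    exact le_csSup (hFbdd s hs) (mem_image_of_mem _ hx)
  have hFnn : ∀ s ∈ Ioc (0:ℝ) T, 0 ≤ F s := by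
    intro s hs
    refine le_trans ?_ (hFge s hs (1/2) (by norm_num))
    exact div_nonneg (abs_nonneg _) (hη_pos (1/2) (by norm_num)).le
  have hFb : ∀ s ∈ Ioc (0:ℝ) T, ∀ x ∈ Ioo (0:ℝ) 1, |f s x| ≤ F s * η x := by
    intro s hs x hx
    have h1 := hFge s hs x hx
    have h2 := hη_pos x (Ioo_subset_Icc_self hx)
    rw [div_le_iff₀ h2] at h1
    exact h1
  -- boundary quantities
  set B0 : ℝ → ℝ := fun s =>
    min (|u s 0| / η 0) (|μ₀ * ux s 0 - lam₀ * u s 0| / |μ₀ * η' 0 - lam₀ * η 0|) with hB0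
  set B1 : ℝ → ℝ := fun s =>
    min (|u s 1| / η 1) (|μ₁ * ux s 1 + lam₁ * u s 1| / (μ₁ * η' 1 + lam₁ * η 1)) with hB1
  set Q : ℝ → ℝ := fun s => max (max (B0 s) (B1 s)) (F s / (σ - ζ)) with hQ
  have hη0 : 0 < η 0 := hη_pos 0 h01
  have hη1p : 0 < η 1 := hη_pos 1 h11
  have hB0nn : ∀ s, 0 ≤ B0 s := by
    intro s
    simp only [hB0]
    apply le_min
    · exact div_nonneg (abs_nonneg _) hη0.le
    · exact div_nonneg (abs_nonneg _) (abs_nonneg _)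
  have hB1nn : ∀ s, 0 ≤ B1 s := by
    intro s
    simp only [hB1]
    apply le_min
    · exact div_nonneg (abs_nonneg _) hη1p.le
    · exact div_nonneg (abs_nonneg _) hbc1.le
  have hQnn : ∀ s ∈ Ioc (0:ℝ) T, 0 ≤ Q s := by
    intro s hs
    rw [hQ]
    exact le_trans (hB0nn s) (le_trans (le_max_left _ _) (le_max_left _ _))
  set Qb : ℝ := max (CU / m) ((MF / m) / (σ - ζ)) with hQb
  have hQbnn : 0 ≤ Qb := le_trans (by positivity) (le_max_left _ _)
  have hQle : ∀ s ∈ Ioc (0:ℝ) T, Q s ≤ Qb := by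
    intro s hs
    have hsIcc : s ∈ Icc (0:ℝ) T := ⟨hs.1.le, hs.2⟩
    have h0 : B0 s ≤ CU / m := by
      simp only [hB0]
      refine le_trans (min_le_left _ _) ?_
      exact div_le_div₀ hCUnn (hCU' s hsIcc 0 h01) hmpos (hmle 0 h01)
    have h1 : B1 s ≤ CU / m := by
      simp only [hB1]
      refine le_trans (min_le_left _ _) ?_
      exact div_le_div₀ hCUnn (hCU' s hsIcc 1 h11) hmpos (hmle 1 h11)
    have h2 : F s / (σ - ζ) ≤ (MF / m) / (σ - ζ) :=
      div_le_div₀ (div_nonneg hMFnn hmpos.le) (hFle s hs) hσζ (le_refl _)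
    simp only [hQ, hQb]
    exact max_le (max_le (h0.trans (le_max_left _ _)) (h1.trans (le_max_left _ _)))
      (h2.trans (le_max_right _ _))
  -- the sup over time of the boundary/forcing quantity
  set Φ : ℝ → ℝ := fun s =>
      max (max
          (min (|u s 0| / η 0) (|μ₀ * ux s 0 - lam₀ * u s 0| / |μ₀ * η' 0 - lam₀ * η 0|))
          (min (|u s 1| / η 1) (|μ₁ * ux s 1 + lam₁ * u s 1| / (μ₁ * η' 1 + lam₁ * η 1))))
        (sSup ((fun x => |f s x| / η x) '' Set.Ioo 0 1) / (σ - ζ)) *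
      Real.exp (-ζ * (t - s)) with hΦ
  have hΦQ : ∀ s, Φ s = Q s * Real.exp (-ζ * (t - s)) := by
    intro s
    simp only [hΦ, hQ, hB0, hB1, hF]
  have hΦbdd : BddAbove (Φ '' Ioc 0 t) := by
    refine ⟨Qb, ?_⟩
    rintro v ⟨s, hs, rfl⟩
    have hsT : s ∈ Ioc (0:ℝ) T := ⟨hs.1, hs.2.trans ht.2⟩
    rw [hΦQ]
    calc Q s * Real.exp (-ζ * (t - s)) ≤ Qb * 1 := by
          apply mul_le_mul (hQle s hsT) ?_ (Real.exp_nonneg _) hQbnn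
          rw [show (1:ℝ) = Real.exp 0 by simp]
          apply Real.exp_le_exp.mpr
          have h9 : 0 ≤ t - s := by linarith [hs.2]
          have := mul_nonneg hζ0 h9
          linarith
      _ = Qb := mul_one _
  have hΦne : (Φ '' Ioc 0 t).Nonempty := (nonempty_Ioc.mpr ht.1).image _
  have hΦnn : 0 ≤ sSup (Φ '' Ioc 0 t) := by
    refine le_trans ?_ (le_csSup hΦbdd (mem_image_of_mem _ (right_mem_Ioc.mpr ht.1)))
    rw [hΦQ]
    exact mul_nonneg (hQnn t ⟨ht.1, ht.2⟩) (Real.exp_nonneg _)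
  set K : ℝ := max (H 0) (Real.exp (ζ * t) * sSup (Φ '' Ioc 0 t)) with hK
  have hKnn : 0 ≤ K := le_trans (hHnn 0 ⟨le_refl 0, hT.le⟩) (le_max_left _ _)
  have hKH0 : H 0 ≤ K := le_max_left _ _
  have hKQ : ∀ s ∈ Ioc 0 t, Real.exp (ζ * s) * Q s ≤ K := by
    intro s hs
    have h1 : Φ s ≤ sSup (Φ '' Ioc 0 t) := le_csSup hΦbdd (mem_image_of_mem _ hs)
    have h2 : Real.exp (ζ * s) * Q s = Real.exp (ζ * t) * Φ s := by
      rw [hΦQ, ← mul_assoc, mul_comm (Real.exp (ζ * t)), mul_assoc, ← Real.exp_add]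
      ring_nf
    rw [h2]
    calc Real.exp (ζ * t) * Φ s ≤ Real.exp (ζ * t) * sSup (Φ '' Ioc 0 t) := by
          exact mul_le_mul_of_nonneg_left h1 (Real.exp_nonneg _)
      _ ≤ K := le_max_right _ _
  -- Robin boundary conditions
  have hRobin0 : ∀ s ∈ Ioc (0:ℝ) T, (∀ x ∈ Icc (0:ℝ) 1, w s x ≤ w s 0) → w s 0 ≤ B0 s := by
    intro s hs hmax
    have hw0' : w s 0 = |u s 0| / η 0 := by rw [hw]
    simp only [hB0]
    refine le_min (le_of_eq hw0') ?_
    rcases eq_or_ne (u s 0) 0 with h0 | h0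
    · rw [hw0', h0]
      simp only [abs_zero, zero_div]
      exact div_nonneg (abs_nonneg _) (abs_nonneg _)
    · set sg : ℝ := if 0 < u s 0 then 1 else -1 with hsg
      have hsgu : sg * u s 0 = |u s 0| := by
        rw [hsg]
        rcases lt_trichotomy (u s 0) 0 with hlt | heq | hgt
        · rw [if_neg (by linarith), abs_of_neg hlt]; ring
        · exact absurd heq h0
        · rw [if_pos hgt, abs_of_pos hgt, one_mul]
      have hsgone : |sg| = 1 := by rw [hsg]; split <;> simp
      have hsgabs : ∀ v : ℝ, sg * v ≤ |v| := by
        intro v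
        calc sg * v ≤ |sg * v| := le_abs_self _
          _ = |v| := by rw [abs_mul, hsgone, one_mul]
      have hφd : HasDerivWithinAt (fun x => sg * u s x / η x)
          ((sg * ux s 0 * η 0 - sg * u s 0 * η' 0) / η 0 ^ 2) (Icc 0 1) 0 :=
        HasDerivWithinAt.div ((hux_bd s hs).1.const_mul sg) (hη1 0 h01) (ne_of_gt hη0)
      have hφmax : ∀ x ∈ Icc (0:ℝ) 1, (fun x => sg * u s x / η x) x ≤
          (fun x => sg * u s x / η x) 0 := by
        intro x hx
        simp only
        have h1 : sg * u s x / η x ≤ |u s x| / η x := by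
          have := mul_le_mul_of_nonneg_right (hsgabs (u s x)) (inv_nonneg.mpr (hη_pos x hx).le)
          simpa [div_eq_mul_inv] using this
        have h2 : |u s x| / η x = w s x := by rw [hw]
        have h3 : sg * u s 0 / η 0 = w s 0 := by rw [hw0', ← hsgu]
        rw [h3]
        exact le_trans (h1.trans_eq h2) (hmax x hx)
      have hD := my_deriv_nonpos_left hφd hφmax
      have hsq : (0:ℝ) < η 0 ^ 2 := by positivity
      have hnum : sg * ux s 0 * η 0 - sg * u s 0 * η' 0 ≤ 0 := by
        by_contra hcc
        push_neg at hcc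
        have : 0 < (sg * ux s 0 * η 0 - sg * u s 0 * η' 0) / η 0 ^ 2 := div_pos hcc hsq
        linarith
      have hp : 0 < sg * u s 0 := by rw [hsgu]; exact abs_pos.mpr h0
      have hqpos : 0 < lam₀ * η 0 - μ₀ * η' 0 := by linarith
      have hden : |μ₀ * η' 0 - lam₀ * η 0| = lam₀ * η 0 - μ₀ * η' 0 := by
        rw [abs_of_neg (by linarith)]; ring
      have hkey : (sg * u s 0) * (lam₀ * η 0 - μ₀ * η' 0) ≤
          -(sg * (μ₀ * ux s 0 - lam₀ * u s 0)) * η 0 := by nlinarith [hnum, hμ₀.le]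
      have habs : -(sg * (μ₀ * ux s 0 - lam₀ * u s 0)) ≤ |μ₀ * ux s 0 - lam₀ * u s 0| := by
        calc -(sg * (μ₀ * ux s 0 - lam₀ * u s 0)) ≤ |sg * (μ₀ * ux s 0 - lam₀ * u s 0)| :=
              neg_le_abs _
          _ = |μ₀ * ux s 0 - lam₀ * u s 0| := by rw [abs_mul, hsgone, one_mul]
      rw [hw0', hden, div_le_div_iff₀ hη0 hqpos, ← hsgu]
      nlinarith [hkey, habs, hη0]
  have hRobin1 : ∀ s ∈ Ioc (0:ℝ) T, (∀ x ∈ Icc (0:ℝ) 1, w s x ≤ w s 1) → w s 1 ≤ B1 s := by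
    intro s hs hmax
    have hw1' : w s 1 = |u s 1| / η 1 := by rw [hw]
    simp only [hB1]
    refine le_min (le_of_eq hw1') ?_
    rcases eq_or_ne (u s 1) 0 with h0 | h0
    · rw [hw1', h0]
      simp only [abs_zero, zero_div]
      exact div_nonneg (abs_nonneg _) hbc1.le
    · set sg : ℝ := if 0 < u s 1 then 1 else -1 with hsg
      have hsgu : sg * u s 1 = |u s 1| := by
        rw [hsg]
        rcases lt_trichotomy (u s 1) 0 with hlt | heq | hgt
        · rw [if_neg (by linarith), abs_of_neg hlt]; ring
        · exact absurd heq h0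
        · rw [if_pos hgt, abs_of_pos hgt, one_mul]
      have hsgone : |sg| = 1 := by rw [hsg]; split <;> simp
      have hsgabs : ∀ v : ℝ, sg * v ≤ |v| := by
        intro v
        calc sg * v ≤ |sg * v| := le_abs_self _
          _ = |v| := by rw [abs_mul, hsgone, one_mul]
      have hφd : HasDerivWithinAt (fun x => sg * u s x / η x)
          ((sg * ux s 1 * η 1 - sg * u s 1 * η' 1) / η 1 ^ 2) (Icc 0 1) 1 :=
        HasDerivWithinAt.div ((hux_bd s hs).2.const_mul sg) (hη1 1 h11) (ne_of_gt hη1p)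
      have hφmax : ∀ x ∈ Icc (0:ℝ) 1, (fun x => sg * u s x / η x) x ≤
          (fun x => sg * u s x / η x) 1 := by
        intro x hx
        simp only
        have h1 : sg * u s x / η x ≤ |u s x| / η x := by
          have := mul_le_mul_of_nonneg_right (hsgabs (u s x)) (inv_nonneg.mpr (hη_pos x hx).le)
          simpa [div_eq_mul_inv] using this
        have h2 : |u s x| / η x = w s x := by rw [hw]
        have h3 : sg * u s 1 / η 1 = w s 1 := by rw [hw1', ← hsgu]
        rw [h3]
        exact le_trans (h1.trans_eq h2) (hmax x hx)
      have hD := my_deriv_nonneg_right hφd hφmax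
      have hsq : (0:ℝ) < η 1 ^ 2 := by positivity
      have hnum : 0 ≤ sg * ux s 1 * η 1 - sg * u s 1 * η' 1 := by
        by_contra hcc
        push_neg at hcc
        have : (sg * ux s 1 * η 1 - sg * u s 1 * η' 1) / η 1 ^ 2 < 0 :=
          div_neg_of_neg_of_pos hcc hsq
        linarith
      have hp : 0 < sg * u s 1 := by rw [hsgu]; exact abs_pos.mpr h0
      have hkey : (sg * u s 1) * (μ₁ * η' 1 + lam₁ * η 1) ≤
          (sg * (μ₁ * ux s 1 + lam₁ * u s 1)) * η 1 := by nlinarith [hnum, hμ₁.le]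
      have habs : sg * (μ₁ * ux s 1 + lam₁ * u s 1) ≤ |μ₁ * ux s 1 + lam₁ * u s 1| := hsgabs _
      rw [hw1', div_le_div_iff₀ hη1p hbc1, ← hsgu]
      nlinarith [hkey, habs, hη1p]
  -- the scaled sup function
  set G : ℝ → ℝ := fun s => Real.exp (ζ * s) * H s with hG
  have Gcont : ContinuousOn G (Icc (0:ℝ) T) := by
    rw [hG]
    exact ((Real.continuous_exp.comp (continuous_const.mul continuous_id)).continuousOn).mul Hcont
  have hC2' : ∀ᵐ r ∂(volume : Measure ℝ), r ∈ Ioo 0 T →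
      ((∀ x ∈ Set.Ioo (0:ℝ) 1, HasDerivAt (u r) (ux r x) x) ∧
      (∀ x ∈ Set.Ioo (0:ℝ) 1, HasDerivAt (ux r) (uxx r x) x) ∧
      ContinuousOn (uxx r) (Set.Ioo 0 1) ∧
      (∀ x ∈ Set.Ioo (0:ℝ) 1,
        ut r x = a r x * uxx r x + b r x * ux r x + c r x * u r x + f r x)) :=
    (ae_restrict_iff' measurableSet_Ioo).mp hC2_pde
  have hIooIcc : Ioo (0:ℝ) T ⊆ Icc 0 T := fun s hs => ⟨hs.1.le, hs.2.le⟩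
  -- MAIN CLAIM
  have CLAIM : ∀ t' ∈ Ioc 0 t, t' < T → G t' ≤ K := by
    intro t' ht' ht'T
    by_contra hGc
    push_neg at hGc
    have ht'le : Icc (0:ℝ) t' ⊆ Icc (0:ℝ) T := Icc_subset_Icc le_rfl (ht'.2.trans ht.2)
    have hGcont' : ContinuousOn G (Icc 0 t') := Gcont.mono ht'le
    obtain ⟨sM, hsMa, hsMb⟩ := isCompact_Icc.exists_isMaxOn (nonempty_Icc.mpr ht'.1.le) hGcont'
    have hsMb' := isMaxOn_iff.mp hsMb
    set M : ℝ := G sM with hM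
    have hMK : K < M := lt_of_lt_of_le hGc (hsMb' t' (right_mem_Icc.mpr ht'.1.le))
    set Smax : Set ℝ := Icc 0 t' ∩ G ⁻¹' {M} with hSmax
    have hScl : IsClosed Smax :=
      hGcont'.preimage_isClosed_of_isClosed isClosed_Icc isClosed_singleton
    have hSne : Smax.Nonempty := ⟨sM, hsMa, rfl⟩
    have hSbd : BddBelow Smax := ⟨0, fun s hs => hs.1.1⟩
    set s₀ : ℝ := sInf Smax with hs₀
    have hs₀mem : s₀ ∈ Smax := hScl.csInf_mem hSne hSbd
    have hs₀G : G s₀ = M := hs₀mem.2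
    have hs₀pos : 0 < s₀ := by
      rcases hs₀mem.1.1.lt_or_eq with h | h
      · exact h
      · exfalso
        have hG0 : G 0 = H 0 := by simp [hG]
        have h2 : G 0 = M := by rw [h]; exact hs₀G
        linarith [hKH0, hG0 ▸ h2 ▸ hMK]
    have hs₀t' : s₀ ≤ t' := hs₀mem.1.2
    have hs₀T : s₀ < T := lt_of_le_of_lt hs₀t' ht'T
    set ρ : ℝ := (σ - ζ) * (M - K) / 2 with hρ
    have hρpos : 0 < ρ := by
      rw [hρ]
      exact div_pos (mul_pos hσζ (by linarith)) two_pos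
    obtain ⟨δ, hδpos, hδ⟩ :=
      Metric.continuousOn_iff.mp hGcont' s₀ hs₀mem.1 ((M - K)/2) (by linarith)
    set aa : ℝ := max (s₀ - δ/2) (s₀/2) with haa
    have haa1 : 0 < aa := lt_of_lt_of_le (by linarith) (le_max_right _ _)
    have haa2 : aa < s₀ := by
      rw [haa]
      exact max_lt (by linarith) (by linarith)
    have haa3 : s₀ - aa < δ := by
      have h := le_max_left (s₀ - δ/2) (s₀/2)
      rw [← haa] at h
      linarith
    have hJsub : Icc aa s₀ ⊆ Icc 0 t' := fun s hs =>
      ⟨le_trans haa1.le hs.1, le_trans hs.2 hs₀t'⟩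
    have hJG : ∀ s ∈ Icc aa s₀, (M + K)/2 < G s := by
      intro s hsJ
      have h1 := hδ s (hJsub hsJ) (by
        rw [Real.dist_eq, abs_lt]
        constructor
        · linarith [hsJ.1]
        · linarith [hsJ.2, hδpos])
      rw [Real.dist_eq, hs₀G] at h1
      have h2 := abs_lt.mp h1
      linarith [h2.1]
    have hJT : Icc aa s₀ ⊆ Ioo 0 T := fun s hs =>
      ⟨lt_of_lt_of_le haa1 hs.1, lt_of_le_of_lt hs.2 hs₀T⟩
    -- bound on ut
    obtain ⟨L0, hL0⟩ := (isCompact_Icc.prod isCompact_Icc).exists_bound_of_continuousOn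
      (hut_cont.mono (fun p hp => ⟨hJT hp.1, hp.2⟩))
    set L : ℝ := max L0 0 with hL
    have hLnn : 0 ≤ L := le_max_right _ _
    have hLb : ∀ s ∈ Icc aa s₀, ∀ x ∈ Icc (0:ℝ) 1, |ut s x| ≤ L := by
      intro s hsJ x hx
      have h := hL0 (s, x) ⟨hsJ, hx⟩
      rw [Real.norm_eq_abs] at h
      exact le_trans h (le_max_left _ _)
    -- u Lipschitz in time
    have hulip : ∀ x ∈ Icc (0:ℝ) 1, ∀ s ∈ Icc aa s₀, ∀ s' ∈ Icc aa s₀,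
        |u s x - u s' x| ≤ L * |s - s'| := by
      intro x hx s hsJ s' hs'J
      have hder : ∀ τ ∈ Icc aa s₀, HasDerivWithinAt (fun τ => u τ x) (ut τ x) (Icc aa s₀) τ :=
        fun τ hτ => (hut τ (hJT hτ) x hx).hasDerivWithinAt
      have h := Convex.norm_image_sub_le_of_norm_hasDerivWithin_le hder
        (fun τ hτ => by rw [Real.norm_eq_abs]; exact hLb τ hτ x hx) (convex_Icc _ _) hs'J hsJ
      rwa [Real.norm_eq_abs, Real.norm_eq_abs] at h
    -- H Lipschitz on J
    have hsupd : ∀ s ∈ Icc aa s₀, ∀ s' ∈ Icc aa s₀, H s ≤ H s' + L / m * |s - s'| := by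
      intro s hsJ s' hs'J
      have hsT : s ∈ Icc (0:ℝ) T := hIooIcc (hJT hsJ)
      have hs'T : s' ∈ Icc (0:ℝ) T := hIooIcc (hJT hs'J)
      have hbddw : BddAbove (w s' '' Icc 0 1) := isCompact_Icc.bddAbove_image (hws s' hs'T)
      have hHs' : ∀ x ∈ Icc (0:ℝ) 1, w s' x ≤ H s' := hub s' hs'T
      have hHeq : H s = sSup (w s '' Icc 0 1) := by rw [hH]
      rw [hHeq]
      apply csSup_le ((nonempty_Icc.mpr zero_le_one).image _)
      rintro v ⟨x, hx, rfl⟩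
      have h1 : |u s x| - |u s' x| ≤ |u s x - u s' x| := abs_sub_abs_le_abs_sub _ _
      have h2 := hulip x hx s hsJ s' hs'J
      have hηx := hη_pos x hx
      have h3 : w s x - w s' x = (|u s x| - |u s' x|) / η x := by
        rw [hw]
        simp only
        rw [div_sub_div_same]
      have h4 : (|u s x| - |u s' x|) / η x ≤ (L * |s - s'|) / η x :=
        (div_le_div_iff_of_pos_right hηx).mpr (h1.trans h2)
      have h5 : (L * |s - s'|) / η x ≤ (L * |s - s'|) / m :=
        div_le_div_of_nonneg_left (mul_nonneg hLnn (abs_nonneg _)) hmpos (hmle x hx)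
      have h6 := hHs' x hx
      have h7 : (L * |s - s'|) / m = L / m * |s - s'| := by ring
      linarith
    have hHlip : ∀ s ∈ Icc aa s₀, ∀ s' ∈ Icc aa s₀, |H s - H s'| ≤ L / m * |s - s'| := by
      intro s hsJ s' hs'J
      rw [abs_sub_le_iff]
      constructor
      · linarith [hsupd s hsJ s' hs'J]
      · have := hsupd s' hs'J s hsJ
        rw [abs_sub_comm] at this
        linarith
    -- exp Lipschitz on J
    have hexplip : ∀ s ∈ Icc aa s₀, ∀ s' ∈ Icc aa s₀,
        |Real.exp (ζ * s) - Real.exp (ζ * s')| ≤ ζ * Real.exp (ζ * t') * |s - s'| := by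
      intro s hsJ s' hs'J
      have hder : ∀ τ ∈ Icc aa s₀, HasDerivWithinAt (fun τ : ℝ => Real.exp (ζ * τ))
          (Real.exp (ζ * τ) * (ζ * 1)) (Icc aa s₀) τ := fun τ hτ =>
        (((Real.hasDerivAt_exp (ζ * τ)).comp τ ((hasDerivAt_id τ).const_mul ζ))).hasDerivWithinAt
      have hbound : ∀ τ ∈ Icc aa s₀, ‖Real.exp (ζ * τ) * (ζ * 1)‖ ≤ ζ * Real.exp (ζ * t') := by
        intro τ hτ
        rw [Real.norm_eq_abs, abs_mul, abs_of_pos (Real.exp_pos _), abs_of_nonneg (by linarith)]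
        have hττ : τ ≤ t' := le_trans hτ.2 hs₀t'
        have h7 := mul_le_mul_of_nonneg_left
          (Real.exp_le_exp.mpr (mul_le_mul_of_nonneg_left hττ hζ0)) hζ0
        linarith
      have h := Convex.norm_image_sub_le_of_norm_hasDerivWithin_le hder hbound
        (convex_Icc _ _) hs'J hsJ
      rwa [Real.norm_eq_abs, Real.norm_eq_abs] at h
    -- G Lipschitz on J
    set CG : ℝ := Real.exp (ζ * t') * (L / m) + ζ * Real.exp (ζ * t') * (CU / m) with hCG
    have hCGnn : 0 ≤ CG := by
      rw [hCG]
      apply add_nonneg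
      · exact mul_nonneg (Real.exp_nonneg _) (div_nonneg hLnn hmpos.le)
      · exact mul_nonneg (mul_nonneg hζ0 (Real.exp_nonneg _)) (div_nonneg hCUnn hmpos.le)
    have hGlip : ∀ s ∈ Icc aa s₀, ∀ s' ∈ Icc aa s₀, |G s - G s'| ≤ CG * |s - s'| := by
      intro s hsJ s' hs'J
      have hs'T : s' ∈ Icc (0:ℝ) T := hIooIcc (hJT hs'J)
      have hdecomp : G s - G s' = Real.exp (ζ * s) * (H s - H s')
          + (Real.exp (ζ * s) - Real.exp (ζ * s')) * H s' := by
        simp only [hG]; ring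
      have h1 : |G s - G s'| ≤ Real.exp (ζ * s) * |H s - H s'|
          + |Real.exp (ζ * s) - Real.exp (ζ * s')| * H s' := by
        rw [hdecomp]
        refine le_trans (abs_add_le _ _) ?_
        rw [abs_mul, abs_mul, abs_of_pos (Real.exp_pos _), abs_of_nonneg (hHnn s' hs'T)]
      have h2 := hHlip s hsJ s' hs'J
      have h3 := hexplip s hsJ s' hs'J
      have h4 : Real.exp (ζ * s) ≤ Real.exp (ζ * t') :=
        Real.exp_le_exp.mpr (mul_le_mul_of_nonneg_left (le_trans hsJ.2 hs₀t') hζ0)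
      have h5 : H s' ≤ CU / m := hHB s' hs'T
      have h6 : 0 ≤ |H s - H s'| := abs_nonneg _
      have h7 : 0 ≤ |Real.exp (ζ * s) - Real.exp (ζ * s')| := abs_nonneg _
      have h8 : 0 ≤ H s' := hHnn s' hs'T
      have h9 : (0:ℝ) < Real.exp (ζ * s) := Real.exp_pos _
      have h10 : 0 ≤ ζ * Real.exp (ζ * t') * |s - s'| :=
        mul_nonneg (mul_nonneg hζ0 (Real.exp_nonneg _)) (abs_nonneg _)
      rw [hCG]
      have ha2 := mul_le_mul h4 h2 h6 (Real.exp_nonneg _)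
      have hb2 := mul_le_mul h3 h5 h8 h10
      linarith [ha2, hb2]
    -- pointwise a.e. derivative bound for G
    have haeG : ∀ᵐ r ∂(volume : Measure ℝ), r ∈ Ioo aa s₀ → ∀ y : ℝ, HasDerivAt G y r → y ≤ -ρ := by
      filter_upwards [hC2'] with r hpack hrmem y hy
      have hrJ : r ∈ Icc aa s₀ := Ioo_subset_Icc_self hrmem
      have hrT : r ∈ Ioo 0 T := hJT hrJ
      have hrIccT : r ∈ Icc (0:ℝ) T := hIooIcc hrT
      have hrIocT : r ∈ Ioc (0:ℝ) T := ⟨hrT.1, hrT.2.le⟩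
      have hrIoc : r ∈ Ioc (0:ℝ) t := ⟨hrT.1, le_trans hrJ.2 (le_trans hs₀t' ht'.2)⟩
      have hGr : (M + K)/2 < G r := hJG r hrJ
      have hGrK : K < G r := by linarith
      obtain ⟨hd1, hd2, _, hd4⟩ := hpack hrT
      obtain ⟨xm, hxm, hxmax, hHr⟩ := hatt r hrIccT
      -- the maximizer is interior
      have hGrQ : ∀ x0 ∈ ({0, 1} : Set ℝ), xm = x0 → False := by
        intro x0 hx0 hxeq
        have hmaxx : ∀ x' ∈ Icc (0:ℝ) 1, w r x' ≤ w r x0 := by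
          intro x' hx'
          rw [← hxeq]
          exact hxmax x' hx'
        have h2 : H r ≤ Q r := by
          rcases hx0 with h | h
          · subst h
            refine le_trans (le_of_eq (hxeq ▸ hHr)) ?_
            refine le_trans (hRobin0 r hrIocT hmaxx) ?_
            rw [hQ]
            exact le_trans (le_max_left (B0 r) (B1 r)) (le_max_left _ _)
          · subst h
            refine le_trans (le_of_eq (hxeq ▸ hHr)) ?_
            refine le_trans (hRobin1 r hrIocT hmaxx) ?_
            rw [hQ]
            exact le_trans (le_max_right (B0 r) (B1 r)) (le_max_left _ _)
        have h3 : G r ≤ Real.exp (ζ * r) * Q r := by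
          simp only [hG]
          exact mul_le_mul_of_nonneg_left h2 (Real.exp_nonneg _)
        linarith [hKQ r hrIoc]
      have hxmIoo : xm ∈ Ioo (0:ℝ) 1 := by
        rcases hxm.1.lt_or_eq with h0x | h0x
        · rcases hxm.2.lt_or_eq with hx1 | hx1
          · exact ⟨h0x, hx1⟩
          · exact (hGrQ 1 (by simp) hx1).elim
        · exact (hGrQ 0 (by simp) h0x.symm).elim
      have hHrpos : 0 < H r := by
        by_contra hc
        push_neg at hc
        have hG0 : G r ≤ 0 := by
          simp only [hG]
          exact mul_nonpos_of_nonneg_of_nonpos (Real.exp_nonneg _) hc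
        linarith
      have hηm := hη_pos xm (Ioo_subset_Icc_self hxmIoo)
      have hune : u r xm ≠ 0 := by
        intro hzero
        have hwz : w r xm = 0 := by
          rw [hw]
          simp only
          rw [hzero, abs_zero, zero_div]
        rw [hHr, hwz] at hHrpos
        exact lt_irrefl 0 hHrpos
      set sg : ℝ := if 0 < u r xm then 1 else -1 with hsg
      have hsgu : sg * u r xm = |u r xm| := by
        rw [hsg]
        rcases lt_trichotomy (u r xm) 0 with hlt | heq | hgt
        · rw [if_neg (by linarith), abs_of_neg hlt]; ring
        · exact absurd heq hune
        · rw [if_pos hgt, abs_of_pos hgt, one_mul]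
      have hsgone : |sg| = 1 := by rw [hsg]; split <;> simp
      have hsgabs : ∀ v : ℝ, sg * v ≤ |v| := by
        intro v
        calc sg * v ≤ |sg * v| := le_abs_self _
          _ = |v| := by rw [abs_mul, hsgone, one_mul]
      have hueq : sg * u r xm = H r * η xm := by
        rw [hsgu, hHr, hw]
        simp only
        field_simp
      -- the touching function θ in space
      set θ : ℝ → ℝ := fun x => sg * u r x - H r * η x with hθ
      set θ' : ℝ → ℝ := fun x => sg * ux r x - H r * η' x with hθ'
      have hθd : ∀ x ∈ Ioo (0:ℝ) 1, HasDerivAt θ (θ' x) x := by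
        intro x hx
        have h1 : HasDerivAt (u r) (ux r x) x := hd1 x hx
        have h2 : HasDerivAt η (η' x) x :=
          (hη1 x (Ioo_subset_Icc_self hx)).hasDerivAt (Icc_mem_nhds hx.1 hx.2)
        exact (h1.const_mul sg).sub (h2.const_mul (H r))
      have hθ'd : HasDerivAt θ' (sg * uxx r xm - H r * η'' xm) xm := by
        have h1 : HasDerivAt (ux r) (uxx r xm) xm := hd2 xm hxmIoo
        have h2 : HasDerivAt η' (η'' xm) xm :=
          (hη2 xm (Ioo_subset_Icc_self hxmIoo)).hasDerivAt (Icc_mem_nhds hxmIoo.1 hxmIoo.2)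
        exact (h1.const_mul sg).sub (h2.const_mul (H r))
      have hθxm : θ xm = 0 := by
        simp only [hθ]
        linarith [hueq]
      have hθmax : ∀ x ∈ Ioo (0:ℝ) 1, θ x ≤ θ xm := by
        intro x hx
        have hxI := Ioo_subset_Icc_self hx
        have h1 : sg * u r x ≤ |u r x| := hsgabs _
        have h2 : w r x ≤ H r := hub r hrIccT x hxI
        have hηx := hη_pos x hxI
        have h3 : w r x * η x = |u r x| := by
          rw [hw]
          simp only
          exact div_mul_cancel₀ _ (ne_of_gt hηx)
        have h4 : w r x * η x ≤ H r * η x := mul_le_mul_of_nonneg_right h2 hηx.le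
        rw [hθxm]
        simp only [hθ]
        linarith
      have hθ'0 : θ' xm = 0 := by
        have hloc : IsLocalMax θ xm := by
          filter_upwards [Ioo_mem_nhds hxmIoo.1 hxmIoo.2] with x hx using hθmax x hx
        exact hloc.hasDerivAt_eq_zero (hθd xm hxmIoo)
      have hθ''le : sg * uxx r xm - H r * η'' xm ≤ 0 :=
        my_secondDeriv_nonpos hxmIoo hθd hθ'0 hθ'd hθmax
      have huxeq : sg * ux r xm = H r * η' xm := by
        have h := hθ'0
        simp only [hθ'] at h
        linarith
      -- the PDE bound at the interior maximum
      have hpde := hd4 xm hxmIoo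
      have hfb := hFb r hrIocT xm hxmIoo
      have hcnd := hcond r hrT xm hxmIoo
      have hanneg := ha r hrT xm hxmIoo
      have hutb : sg * ut r xm ≤ (-σ * H r + F r) * η xm := by
        have h1 : sg * ut r xm = a r xm * (sg * uxx r xm) + b r xm * (sg * ux r xm)
            + c r xm * (sg * u r xm) + sg * f r xm := by rw [hpde]; ring
        have h2 : a r xm * (sg * uxx r xm) ≤ a r xm * (H r * η'' xm) :=
          mul_le_mul_of_nonneg_left (by linarith) hanneg
        have h3 : sg * f r xm ≤ F r * η xm := le_trans (hsgabs _) hfb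
        have h4 := mul_le_mul_of_nonneg_left hcnd hHrpos.le
        have h5 : b r xm * (sg * ux r xm) = b r xm * (H r * η' xm) := by rw [huxeq]
        have h6 : c r xm * (sg * u r xm) = c r xm * (H r * η xm) := by rw [hueq]
        linarith [h1, h2, h3, h4, h5, h6]
      -- the touching function ψ in time
      set ψ : ℝ → ℝ := fun s => Real.exp (ζ * s) * (sg * u s xm) / η xm with hψ
      set dd : ℝ := (Real.exp (ζ * r) * (ζ * 1) * (sg * u r xm)
          + Real.exp (ζ * r) * (sg * ut r xm)) / η xm with hdd
      have hψd : HasDerivAt ψ dd r := by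
        have hexp : HasDerivAt (fun s : ℝ => Real.exp (ζ * s)) (Real.exp (ζ * r) * (ζ * 1)) r :=
          (Real.hasDerivAt_exp (ζ * r)).comp r ((hasDerivAt_id r).const_mul ζ)
        have hu' : HasDerivAt (fun s => sg * u s xm) (sg * ut r xm) r :=
          (hut r hrT xm (Ioo_subset_Icc_self hxmIoo)).const_mul sg
        exact (hexp.mul hu').div_const (η xm)
      have hψle : ∀ s ∈ Icc (0:ℝ) T, ψ s ≤ G s := by
        intro s hsT
        simp only [hψ, hG]
        have h1 : sg * u s xm ≤ |u s xm| := hsgabs _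
        have h2 : |u s xm| / η xm = w s xm := by rw [hw]
        have h3 : w s xm ≤ H s := hub s hsT xm (Ioo_subset_Icc_self hxmIoo)
        calc Real.exp (ζ * s) * (sg * u s xm) / η xm
            ≤ Real.exp (ζ * s) * |u s xm| / η xm :=
              (div_le_div_iff_of_pos_right hηm).mpr (mul_le_mul_of_nonneg_left h1 (Real.exp_nonneg _))
          _ = Real.exp (ζ * s) * (|u s xm| / η xm) := by ring
          _ = Real.exp (ζ * s) * w s xm := by rw [h2]
          _ ≤ Real.exp (ζ * s) * H s := mul_le_mul_of_nonneg_left h3 (Real.exp_nonneg _)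
      have hψr : ψ r = G r := by
        simp only [hψ, hG]
        rw [hueq, mul_div_assoc, mul_div_assoc, div_self (ne_of_gt hηm)]
        ring
      -- compare the derivative of G with that of ψ using left slopes
      have hylepsi : y ≤ dd := by
        have hyt := hasDerivAt_iff_tendsto_slope.mp hy
        have hpt := hasDerivAt_iff_tendsto_slope.mp hψd
        haveI : (𝓝[Ioo aa r] r).NeBot := by
          apply mem_closure_iff_nhdsWithin_neBot.mp
          rw [closure_Ioo (ne_of_lt hrmem.1)]
          exact ⟨hrmem.1.le, le_refl r⟩
        have hsub : Ioo aa r ⊆ {r}ᶜ := fun z hz => ne_of_lt hz.2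
        have hev : ∀ᶠ z in 𝓝[Ioo aa r] r, slope G r z ≤ slope ψ r z := by
          filter_upwards [self_mem_nhdsWithin] with z hz
          have hzT : z ∈ Icc (0:ℝ) T := by
            constructor
            · linarith [hz.1]
            · linarith [hz.2, hrT.2]
          have h1 : ψ z ≤ G z := hψle z hzT
          have h2 : z - r < 0 := by linarith [hz.2]
          rw [slope_def_field, slope_def_field]
          rw [div_le_div_right_of_neg h2]
          rw [hψr]
          linarith
        have hty := hyt.mono_left (nhdsWithin_mono _ hsub)
        have htp := hpt.mono_left (nhdsWithin_mono _ hsub)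
        exact le_of_tendsto_of_tendsto hty htp hev
      -- bound dd from above
      have hFr : Real.exp (ζ * r) * F r ≤ (σ - ζ) * K := by
        have h1 : F r / (σ - ζ) ≤ Q r := by rw [hQ]; exact le_max_right _ _
        have h2 : F r ≤ (σ - ζ) * Q r := by
          rw [div_le_iff₀ hσζ] at h1
          linarith
        have h3 := hKQ r hrIoc
        have h4 := mul_le_mul_of_nonneg_left h2 (Real.exp_nonneg (ζ * r))
        have h5 := mul_le_mul_of_nonneg_left h3 hσζ.le
        linarith [h4, h5]
      have hddle : dd ≤ -ρ := by
        have h1 : Real.exp (ζ * r) * (sg * ut r xm)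
            ≤ Real.exp (ζ * r) * ((-σ * H r + F r) * η xm) :=
          mul_le_mul_of_nonneg_left hutb (Real.exp_nonneg _)
        have h2 : Real.exp (ζ * r) * (ζ * 1) * (sg * u r xm)
            = ζ * (Real.exp (ζ * r) * H r) * η xm := by rw [hueq]; ring
        have hGrdef : Real.exp (ζ * r) * H r = G r := by simp only [hG]
        have hGη : Real.exp (ζ * r) * H r * η xm = G r * η xm := by rw [hGrdef]
        have e1 : σ * (Real.exp (ζ * r) * H r * η xm) = σ * (G r * η xm) := by rw [hGη]
        have e2 : ζ * (Real.exp (ζ * r) * H r * η xm) = ζ * (G r * η xm) := by rw [hGη]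
        have e3 : (Real.exp (ζ * r) * F r) * η xm ≤ ((σ - ζ) * K) * η xm :=
          mul_le_mul_of_nonneg_right hFr hηm.le
        have h3 : Real.exp (ζ * r) * (ζ * 1) * (sg * u r xm)
            + Real.exp (ζ * r) * (sg * ut r xm)
            ≤ ((ζ - σ) * G r + (σ - ζ) * K) * η xm := by
          linarith [h1, h2, e1, e2, e3]
        have h4 : (ζ - σ) * G r + (σ - ζ) * K ≤ -ρ := by
          have heq : (ζ - σ) * G r + (σ - ζ) * K = (σ - ζ) * (K - G r) := by ring
          have h5 : K - G r ≤ -((M - K) / 2) := by linarith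
          have h6 := mul_le_mul_of_nonneg_left h5 hσζ.le
          rw [heq, hρ]
          linarith
        rw [hdd, div_le_iff₀ hηm]
        calc Real.exp (ζ * r) * (ζ * 1) * (sg * u r xm) + Real.exp (ζ * r) * (sg * ut r xm)
            ≤ ((ζ - σ) * G r + (σ - ζ) * K) * η xm := h3
          _ ≤ -ρ * η xm := mul_le_mul_of_nonneg_right h4 hηm.le
      linarith
    -- apply the decrease lemma and derive the contradiction
    have hdec := my_lip_decrease haa2 hCGnn hρpos.le hGlip haeG
    have hGaa : G aa ≤ M := hsMb' aa (hJsub (left_mem_Icc.mpr haa2.le))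
    have hposprod := mul_pos hρpos (sub_pos.mpr haa2)
    linarith [hdec, hGaa, hs₀G, hposprod]
    -- conclude G t ≤ K
  have hGtK : G t ≤ K := by
    rcases lt_or_eq_of_le ht.2 with hlt | heq
    · exact CLAIM t ⟨ht.1, le_refl t⟩ hlt
    · -- t = T : limit from the left
      haveI : (𝓝[Ioo (0:ℝ) t] t).NeBot := by
        apply mem_closure_iff_nhdsWithin_neBot.mp
        rw [closure_Ioo (ne_of_lt ht.1)]
        exact ⟨ht.1.le, le_refl t⟩
      have hev : ∀ᶠ s in 𝓝[Ioo (0:ℝ) t] t, G s ≤ K := by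
        filter_upwards [self_mem_nhdsWithin] with s hs
        exact CLAIM s ⟨hs.1, hs.2.le⟩ (lt_of_lt_of_le hs.2 (le_of_eq heq))
      have htd : Tendsto G (𝓝[Ioo (0:ℝ) t] t) (𝓝 (G t)) := by
        have hmem : t ∈ Icc (0:ℝ) T := ⟨ht.1.le, ht.2⟩
        exact (Gcont t hmem).tendsto.mono_left
          (nhdsWithin_mono t (fun s hs => ⟨hs.1.le, hs.2.le.trans ht.2⟩))
      exact le_of_tendsto htd hev
  -- final conversion
  have hwt : (fun x => |u t x| / η x) = w t := by rw [hw]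
  have hw0 : (fun x => |u 0 x| / η x) = w 0 := by rw [hw]
  rw [hwt, hw0]
  have hHt : sSup (w t '' Icc 0 1) = H t := by rw [hH]
  have hH0 : sSup (w 0 '' Icc 0 1) = H 0 := by rw [hH]
  rw [hHt, hH0]
  have hmm : ∀ z : ℝ, Real.exp (-ζ * t) * (Real.exp (ζ * t) * z) = z := by
    intro z
    rw [← mul_assoc, ← Real.exp_add, neg_mul, neg_add_cancel, Real.exp_zero, one_mul]
  have h1 : H t ≤ Real.exp (-ζ * t) * K := by
    have h2 : Real.exp (-ζ * t) * (Real.exp (ζ * t) * H t) ≤ Real.exp (-ζ * t) * K :=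
      mul_le_mul_of_nonneg_left (by simpa [hG] using hGtK) (Real.exp_nonneg _)
    rwa [hmm] at h2
  refine le_trans h1 ?_
  rw [hK, mul_max_of_nonneg _ _ (Real.exp_nonneg (-ζ * t)), hmm]
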